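/- There exists a set Y of 240 unit vectors in a 35-dimensional real inner product space such that Y is closed under negation and for all y, y' ∈ Y with y ≠ y' and y ≠ −y', one has |⟨y, y'⟩| = 1/7. In particular, an antipodal spherical (35, 240, 1/7) code exists. -/

import Mathlib

set_option maxRecDepth 100000
set_option maxHeartbeats 4000000

open RealInnerProductSpace

namespace E8Code

/-! ### Integer combinatorics: 120 representatives of E8 root lines -/

def dot (a b : List ℤ) : ℤ := (List.zipWith (· * ·) a b).sum

def sgn (b : Bool) : ℤ := if b then -1 else 1

def vecD (i j : ℕ) (s : Bool) : List ℤ :=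
  (List.range 8).map (fun k => if k = i then 2 else if k = j then (if s then 2 else -2) else 0)

def vecH (m : ℕ) : List ℤ :=
  let bits := (List.range 6).map (fun t => m.testBit t)
  let par := bits.foldl (fun acc b => xor acc b) false
  1 :: (bits.map sgn) ++ [sgn par]

def r : List (List ℤ) :=
  ((List.range 8).flatMap fun i => (List.range 8).flatMap fun j =>
    if i < j then [vecD i j true, vecD i j false] else [])
  ++ (List.range 64).map vecH

lemma r_len : r.length = 120 := by decide

lemma r_nodup : r.Nodup := by decide

lemma r_norm : (r.all fun a => a.length == 8 && dot a a == 8) = true := by decide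

lemma r_pair : r.Pairwise (fun a b => dot a b = 4 ∨ dot a b = 0 ∨ dot a b = -4) := by decide

lemma dot_comm (a b : List ℤ) : dot a b = dot b a := by
  unfold dot
  rw [List.zipWith_comm_of_comm]
  intro x y; ring

lemma mem_len {a : List ℤ} (ha : a ∈ r) : a.length = 8 := by
  have := List.all_eq_true.mp r_norm a ha
  simp only [Bool.and_eq_true, beq_iff_eq] at this
  exact this.1

lemma mem_norm {a : List ℤ} (ha : a ∈ r) : dot a a = 8 := by
  have := List.all_eq_true.mp r_norm a ha
  simp only [Bool.and_eq_true, beq_iff_eq] at this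
  exact this.2

lemma mem_pair {a b : List ℤ} (ha : a ∈ r) (hb : b ∈ r) (hab : a ≠ b) :
    dot a b = 4 ∨ dot a b = 0 ∨ dot a b = -4 := by
  have hsymm : Symmetric (fun a b : List ℤ => dot a b = 4 ∨ dot a b = 0 ∨ dot a b = -4) := by
    intro x y h
    rcases h with h | h | h <;> rw [dot_comm] at h <;> tauto
  exact (haveI : Std.Symm (fun a b : List ℤ => dot a b = 4 ∨ dot a b = 0 ∨ dot a b = -4) := ⟨fun x y h => hsymm h⟩; r_pair.forall ha hb hab)

/-! ### The harmonic embedding into traceless symmetric matrices -/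

abbrev V := EuclideanSpace ℝ (Fin 8 × Fin 8)

noncomputable def fr (a : List ℤ) : Fin 8 → ℝ := fun i => ((a.getD i 0 : ℤ) : ℝ)

noncomputable def M (a : List ℤ) : V :=
  WithLp.toLp 2 (fun p : Fin 8 × Fin 8 => fr a p.1 * fr a p.2 / 4 - (if p.1 = p.2 then (1:ℝ)/4 else 0))

lemma exists_eight (a : List ℤ) (h : a.length = 8) :
    ∃ x0 x1 x2 x3 x4 x5 x6 x7 : ℤ, a = [x0,x1,x2,x3,x4,x5,x6,x7] := by
  rcases a with _|⟨x0,_|⟨x1,_|⟨x2,_|⟨x3,_|⟨x4,_|⟨x5,_|⟨x6,_|⟨x7,_|⟨x8,t⟩⟩⟩⟩⟩⟩⟩⟩⟩ <;>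
    simp only [List.length] at h <;> first
      | omega
      | exact ⟨x0,x1,x2,x3,x4,x5,x6,x7, rfl⟩

lemma inner_MM (a b : List ℤ) (ha8 : a.length = 8) (hb8 : b.length = 8)
    (haa : dot a a = 8) (hbb : dot b b = 8) :
    ⟪M a, M b⟫ = (dot a b : ℝ)^2 / 16 - 1/2 := by
  obtain ⟨a0,a1,a2,a3,a4,a5,a6,a7,rfl⟩ := exists_eight a ha8
  obtain ⟨b0,b1,b2,b3,b4,b5,b6,b7,rfl⟩ := exists_eight b hb8
  have haa' : (a0:ℝ)*a0+a1*a1+a2*a2+a3*a3+a4*a4+a5*a5+a6*a6+a7*a7 = 8 := by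
    simp [dot] at haa
    have h2 : a0*a0+a1*a1+a2*a2+a3*a3+a4*a4+a5*a5+a6*a6+a7*a7 = (8:ℤ) := by linarith
    exact_mod_cast h2
  have hbb' : (b0:ℝ)*b0+b1*b1+b2*b2+b3*b3+b4*b4+b5*b5+b6*b6+b7*b7 = 8 := by
    simp [dot] at hbb
    have h2 : b0*b0+b1*b1+b2*b2+b3*b3+b4*b4+b5*b5+b6*b6+b7*b7 = (8:ℤ) := by linarith
    exact_mod_cast h2
  simp only [PiLp.inner_apply, RCLike.inner_apply, conj_trivial, M, fr, dot,
    Fintype.sum_prod_type, Fin.sum_univ_eight, List.zipWith, List.sum_cons, List.sum_nil]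
  push_cast
  simp only [List.getD, Fin.isValue]
  norm_num
  linear_combination (-1/16 : ℝ) * haa' + (-1/16 : ℝ) * hbb'

/-! ### The 35-dimensional subspace of traceless symmetric matrices -/

def W : Submodule ℝ V where
  carrier := {x | (∀ i j : Fin 8, x (i,j) = x (j,i)) ∧ ∑ i : Fin 8, x (i,i) = 0}
  add_mem' := by
    rintro x y ⟨hx1, hx2⟩ ⟨hy1, hy2⟩
    refine ⟨fun i j => ?_, ?_⟩
    · show x (i,j) + y (i,j) = x (j,i) + y (j,i); rw [hx1, hy1]
    · show ∑ i : Fin 8, (x (i,i) + y (i,i)) = 0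
      rw [Finset.sum_add_distrib, hx2, hy2, add_zero]
  zero_mem' := by
    refine ⟨fun i j => rfl, ?_⟩
    show ∑ _i : Fin 8, (0:ℝ) = 0
    simp
  smul_mem' := by
    rintro c x ⟨hx1, hx2⟩
    refine ⟨fun i j => ?_, ?_⟩
    · show c * x (i,j) = c * x (j,i); rw [hx1]
    · show ∑ i : Fin 8, c * x (i,i) = 0
      rw [← Finset.mul_sum, hx2, mul_zero]

lemma M_mem {a : List ℤ} (ha : a ∈ r) : M a ∈ W := by
  obtain ⟨a0,a1,a2,a3,a4,a5,a6,a7,ha'⟩ := exists_eight a (mem_len ha)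
  constructor
  · intro i j
    show fr a i * fr a j / 4 - _ = fr a j * fr a i / 4 - _
    rw [mul_comm (fr a i)]
    congr 1
    simp [eq_comm]
  · have haa := mem_norm ha
    subst ha'
    simp [dot] at haa
    have h2 : (a0:ℝ)*a0+a1*a1+a2*a2+a3*a3+a4*a4+a5*a5+a6*a6+a7*a7 = 8 := by
      have : a0*a0+a1*a1+a2*a2+a3*a3+a4*a4+a5*a5+a6*a6+a7*a7 = (8:ℤ) := by linarith
      exact_mod_cast this
    show ∑ i : Fin 8, (fr _ i * fr _ i / 4 - _) = 0
    simp only [Fin.sum_univ_eight, fr, List.getD, Fin.isValue]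
    norm_num
    linarith

def pairs : List (Fin 8 × Fin 8) :=
  ((List.finRange 8).flatMap fun i => (List.finRange 8).flatMap fun j =>
    if i ≤ j ∧ ¬(i = 7 ∧ j = 7) then [(i,j)] else [])

lemma pairs_len : pairs.length = 35 := by decide

def ix (k : Fin 35) : Fin 8 × Fin 8 := pairs.get (Fin.cast pairs_len.symm k)

lemma ix_cover : ∀ p : Fin 8 × Fin 8, p.1 ≤ p.2 → p ≠ (7,7) → ∃ k, ix k = p := by decide

noncomputable def g : V →ₗ[ℝ] EuclideanSpace ℝ (Fin 35) where
  toFun := fun x => WithLp.toLp 2 (fun k => x (ix k))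
  map_add' := fun _ _ => rfl
  map_smul' := fun _ _ => rfl

lemma finrank_W : Module.finrank ℝ W ≤ 35 := by
  have hinj : Function.Injective (g.domRestrict W) := by
    rw [← LinearMap.ker_eq_bot, LinearMap.ker_eq_bot']
    rintro ⟨x, hx1, hx2⟩ hgx
    have hz : ∀ k : Fin 35, x (ix k) = 0 := fun k => congrArg (fun v => v k) hgx
    have key : ∀ p : Fin 8 × Fin 8, p.1 ≤ p.2 → p ≠ (7,7) → x p = 0 := by
      intro p hp hne
      obtain ⟨k, hk⟩ := ix_cover p hp hne
      rw [← hk]; exact hz k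
    have hdiag : ∀ i : Fin 8, i ≠ 7 → x (i,i) = 0 := fun i hi =>
      key (i,i) le_rfl (by simp [hi])
    have h77 : x (7,7) = 0 := by
      have := hx2
      rw [Fin.sum_univ_eight] at this
      have h0 := hdiag 0 (by decide); have h1 := hdiag 1 (by decide)
      have h2 := hdiag 2 (by decide); have h3 := hdiag 3 (by decide)
      have h4 := hdiag 4 (by decide); have h5 := hdiag 5 (by decide)
      have h6 := hdiag 6 (by decide)
      linarith [this]
    have : x = 0 := by
      ext p
      obtain ⟨i, j⟩ := p
      show x (i,j) = (0:ℝ)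
      rcases le_or_gt i j with h | h
      · rcases eq_or_ne (i,j) ((7:Fin 8),(7:Fin 8)) with he | he
        · rw [he]; exact h77
        · exact key (i,j) h he
      · rw [hx1 i j]
        rcases eq_or_ne (j,i) ((7:Fin 8),(7:Fin 8)) with he | he
        · rw [he]; exact h77
        · exact key (j,i) h.le he
    simp [Subtype.ext_iff, this]
  have := LinearMap.finrank_le_finrank_of_injective hinj
  simpa using this

/-! ### Padding isometry -/

noncomputable def pad (m : ℕ) (hm : m ≤ 35) :
    EuclideanSpace ℝ (Fin m) →ₗᵢ[ℝ] EuclideanSpace ℝ (Fin 35) where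
  toLinearMap :=
    { toFun := fun x => WithLp.toLp 2 (fun k : Fin 35 => if h : (k : ℕ) < m then x ⟨k, h⟩ else 0)
      map_add' := by
        intro x y; ext k
        show _ = (fun k => if h : (k:ℕ) < m then x ⟨k,h⟩ else 0) k + _
        by_cases h : (k : ℕ) < m <;> simp [h]
      map_smul' := by
        intro c x; ext k
        show _ = c * (if h : (k:ℕ) < m then x ⟨k,h⟩ else 0)
        by_cases h : (k : ℕ) < m <;> simp [h] }
  norm_map' := by
    intro x
    rw [EuclideanSpace.norm_eq, EuclideanSpace.norm_eq]
    congr 1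
    set F : ℕ → ℝ := fun n => if h : n < m then ‖x ⟨n,h⟩‖^2 else 0 with hF
    have h1 : ∑ k : Fin 35, ‖(if h : (k : ℕ) < m then x ⟨k, h⟩ else 0)‖^2
        = ∑ k : Fin 35, F (k : ℕ) := by
      apply Finset.sum_congr rfl
      intro k _
      by_cases h : (k : ℕ) < m <;> simp [hF, h]
    show ∑ k : Fin 35, ‖(if h : (k : ℕ) < m then x ⟨k, h⟩ else 0)‖^2 = _
    rw [h1, Fin.sum_univ_eq_sum_range F 35, ← Finset.sum_subset
      (Finset.range_subset_range.mpr hm) (by intro n _ hn; simp at hn; simp [hF, hn]),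
      ← Fin.sum_univ_eq_sum_range F m]
    apply Finset.sum_congr rfl
    intro k _
    simp [hF, k.isLt]

/-! ### The final vectors -/

noncomputable def E : W →ₗᵢ[ℝ] EuclideanSpace ℝ (Fin 35) :=
  (pad (Module.finrank ℝ W) finrank_W).comp (stdOrthonormalBasis ℝ W).repr.toLinearIsometry

noncomputable def cc : ℝ := Real.sqrt (2/7)

noncomputable def f (a : List ℤ) (ha : a ∈ r) : EuclideanSpace ℝ (Fin 35) :=
  E ⟨cc • M a, W.smul_mem cc (M_mem ha)⟩

lemma inner_f {a b : List ℤ} (ha : a ∈ r) (hb : b ∈ r) :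
    ⟪f a ha, f b hb⟫ = (2/7) * ((dot a b : ℝ)^2/16 - 1/2) := by
  unfold f
  rw [E.inner_map_map]
  have : ⟪(⟨cc • M a, W.smul_mem cc (M_mem ha)⟩ : W), (⟨cc • M b, W.smul_mem cc (M_mem hb)⟩ : W)⟫
      = ⟪cc • M a, cc • M b⟫ := rfl
  rw [this, real_inner_smul_left, real_inner_smul_right,
    inner_MM a b (mem_len ha) (mem_len hb) (mem_norm ha) (mem_norm hb)]
  have hc : cc * cc = 2/7 := Real.mul_self_sqrt (by norm_num)
  ring_nf
  ring_nf at hc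
  rw [hc]
  ring

lemma inner_f_self {a : List ℤ} (ha : a ∈ r) : ⟪f a ha, f a ha⟫ = 1 := by
  rw [inner_f ha ha, mem_norm ha]
  norm_num

lemma norm_f {a : List ℤ} (ha : a ∈ r) : ‖f a ha‖ = 1 := by
  have h := inner_f_self ha
  rw [real_inner_self_eq_norm_sq] at h
  nlinarith [norm_nonneg (f a ha)]

lemma inner_f_ne {a b : List ℤ} (ha : a ∈ r) (hb : b ∈ r) (hab : a ≠ b) :
    ⟪f a ha, f b hb⟫ = 1/7 ∨ ⟪f a ha, f b hb⟫ = -(1/7) := by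
  rw [inner_f ha hb]
  rcases mem_pair ha hb hab with h | h | h <;> rw [h] <;> norm_num

lemma f_ne {a b : List ℤ} (ha : a ∈ r) (hb : b ∈ r) (hab : a ≠ b) : f a ha ≠ f b hb := by
  intro he
  rcases inner_f_ne ha hb hab with h | h <;> rw [← he, inner_f_self ha] at h <;> norm_num at h

lemma f_ne_neg {a b : List ℤ} (ha : a ∈ r) (hb : b ∈ r) : f a ha ≠ -(f b hb) := by
  intro he
  have h1 : ⟪f a ha, f b hb⟫ = -1 := by
    rw [he, inner_neg_left, inner_f_self hb]
  rcases eq_or_ne a b with rfl | hab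
  · rw [inner_f_self ha] at h1; norm_num at h1
  · rcases inner_f_ne ha hb hab with h | h <;> rw [h] at h1 <;> norm_num at h1

end E8Code

open E8Code in
theorem exists_antipodal_35_240_code :
    ∃ Y : Finset (EuclideanSpace ℝ (Fin 35)),
      Y.card = 240 ∧
      (∀ y ∈ Y, ‖y‖ = 1) ∧
      (∀ y ∈ Y, -y ∈ Y) ∧
      (∀ y ∈ Y, ∀ y' ∈ Y, y ≠ y' → y ≠ -y' → |⟪y, y'⟫| = 1 / 7) := by
  classical
  set S : Finset {a // a ∈ r} := r.toFinset.attach.map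
    ⟨fun p => (⟨p.1, (List.mem_toFinset).mp p.2⟩ : {a // a ∈ r}), by
      intro p q h
      rwa [Subtype.mk.injEq, ← Subtype.ext_iff] at h⟩ with hS
  have hmemS : ∀ p : {a // a ∈ r}, p ∈ S := by
    intro ⟨a, ha⟩
    rw [hS, Finset.mem_map]
    exact ⟨⟨a, List.mem_toFinset.mpr ha⟩, Finset.mem_attach _ _, rfl⟩
  have hScard : S.card = 120 := by
    rw [hS, Finset.card_map, Finset.card_attach, List.toFinset_card_of_nodup r_nodup, r_len]
  set F : {a // a ∈ r} → EuclideanSpace ℝ (Fin 35) := fun p => f p.1 p.2 with hF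
  have hFinj : Function.Injective F := by
    intro p q h
    by_contra hne
    exact f_ne p.2 q.2 (fun hv => hne (Subtype.ext hv)) h
  have hFneg : ∀ p q, F p ≠ -F q := fun p q => f_ne_neg p.2 q.2
  refine ⟨S.image F ∪ S.image (fun p => -F p), ?_, ?_, ?_, ?_⟩
  · rw [Finset.card_union_of_disjoint, Finset.card_image_of_injective _ hFinj,
      Finset.card_image_of_injective _ (fun p q h => hFinj (neg_injective h)), hScard]
    rw [Finset.disjoint_left]
    rintro y hy1 hy2
    obtain ⟨p, _, rfl⟩ := Finset.mem_image.mp hy1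
    obtain ⟨q, _, hq⟩ := Finset.mem_image.mp hy2
    exact hFneg p q (by rw [← hq])
  · intro y hy
    rcases Finset.mem_union.mp hy with h | h
    · obtain ⟨p, _, rfl⟩ := Finset.mem_image.mp h
      exact norm_f p.2
    · obtain ⟨p, _, rfl⟩ := Finset.mem_image.mp h
      rw [norm_neg]
      exact norm_f p.2
  · intro y hy
    rcases Finset.mem_union.mp hy with h | h
    · obtain ⟨p, hp, rfl⟩ := Finset.mem_image.mp h
      exact Finset.mem_union_right _ (Finset.mem_image.mpr ⟨p, hp, rfl⟩)
    · obtain ⟨p, hp, rfl⟩ := Finset.mem_image.mp h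
      exact Finset.mem_union_left _ (Finset.mem_image.mpr ⟨p, hp, by rw [neg_neg]⟩)
  · intro y hy y' hy' hne hnneg
    have hget : ∀ z ∈ S.image F ∪ S.image (fun p => -F p),
        ∃ (p : {a // a ∈ r}) (ε : ℝ), (ε = 1 ∨ ε = -1) ∧ z = ε • F p := by
      intro z hz
      rcases Finset.mem_union.mp hz with h | h
      · obtain ⟨p, _, rfl⟩ := Finset.mem_image.mp h
        exact ⟨p, 1, Or.inl rfl, (one_smul ℝ _).symm⟩
      · obtain ⟨p, _, rfl⟩ := Finset.mem_image.mp h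
        exact ⟨p, -1, Or.inr rfl, by rw [neg_smul, one_smul]⟩
    obtain ⟨p, ε, hε, rfl⟩ := hget y hy
    obtain ⟨q, δ, hδ, rfl⟩ := hget y' hy'
    have hinner : ⟪ε • F p, δ • F q⟫ = ε * δ * ⟪F p, F q⟫ := by
      rw [real_inner_smul_left, real_inner_smul_right]; ring
    rcases eq_or_ne p q with rfl | hpq
    · exfalso
      rcases hε with rfl | rfl <;> rcases hδ with rfl | rfl
      · exact hne rfl
      · exact hnneg (by rw [neg_smul, neg_neg])
      · exact hnneg (by rw [neg_smul])
      · exact hne rfl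
    · have hab : p.1 ≠ q.1 := fun hv => hpq (Subtype.ext hv)
      have habs : |⟪F p, F q⟫| = 1/7 := by
        rcases inner_f_ne p.2 q.2 hab with h | h <;> rw [hF, h] <;> norm_num
      rw [hinner, abs_mul, abs_mul, ← habs]
      rcases hε with rfl | rfl <;> rcases hδ with rfl | rfl <;> norm_num
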